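/- Let n ≥ 2, c_j = 2^{R_j/B} > 1, H_1 ≥ ... ≥ H_n > 0, total budget q with feasibility q ≥ Σ_{j=1}^n (c_j-1)(Π_{s<j} c_s) H_j. If p is the allocation where all rate constraints hold with equality for j = 1, ..., n-1 and Σ_j p_j = q, then the achieved sum rate equals B log₂(1 + q/((Π_{j=1}^{n-1} c_j) H_n) - Σ_{j=1}^{n-1} (c_j - 1) H_j / ((Π_{l=j}^{n-1} c_l) H_n)) + Σ_{j=1}^{n-1} R_j, where the rate of user j is r_j = B log₂(1 + p_j/(Σ_{k=j+1}^n p_k + H_j)). -/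

import Mathlib

open Finset

theorem noma_optimal_sum_rate (n : ℕ) (hn : 2 ≤ n) (B : ℝ) (hB : 0 < B)
    (R c H p r : ℕ → ℝ) (q : ℝ)
    (hR : ∀ j ∈ Icc 1 n, 0 < R j)
    (hc : ∀ j ∈ Icc 1 n, c j = (2 : ℝ) ^ (R j / B))
    (hHpos : ∀ j ∈ Icc 1 n, 0 < H j)
    (hHmono : ∀ j k, 1 ≤ j → j ≤ k → k ≤ n → H k ≤ H j)
    (hfeas : ∑ j ∈ Icc 1 n, (c j - 1) * (∏ s ∈ Ico 1 j, c s) * H j ≤ q)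
    (hppos : ∀ j ∈ Icc 1 n, 0 ≤ p j)
    (hsum : ∑ j ∈ Icc 1 n, p j = q)
    (heq : ∀ j, 1 ≤ j → j ≤ n - 1 →
      p j = (c j - 1) * (∑ k ∈ Icc (j + 1) n, p k + H j))
    (hr : ∀ j ∈ Icc 1 n,
      r j = B * Real.logb 2 (1 + p j / (∑ k ∈ Icc (j + 1) n, p k + H j))) :
    ∑ j ∈ Icc 1 n, r j
      = B * Real.logb 2 (1 + q / ((∏ j ∈ Icc 1 (n - 1), c j) * H n)
          - ∑ j ∈ Icc 1 (n - 1), (c j - 1) * H j / ((∏ l ∈ Icc j (n - 1), c l) * H n))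
        + ∑ j ∈ Icc 1 (n - 1), R j := by
  obtain ⟨m, rfl⟩ : ∃ m, n = m + 1 := ⟨n - 1, by omega⟩
  have hm1 : 1 ≤ m := by omega
  simp only [Nat.add_sub_cancel] at *
  -- c is > 1 on the range
  have hc1 : ∀ j ∈ Icc 1 (m + 1), 1 < c j := by
    intro j hj
    rw [hc j hj]
    rw [Real.one_lt_rpow_iff_of_pos (by norm_num : (0:ℝ) < 2)]
    exact Or.inl ⟨one_lt_two, div_pos (hR j hj) hB⟩
  have hcpos : ∀ j ∈ Icc 1 (m + 1), 0 < c j :=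
    fun j hj => lt_trans one_pos (hc1 j hj)
  -- tail sums are nonneg
  have htail : ∀ mm, 1 ≤ mm → 0 ≤ ∑ k ∈ Icc mm (m + 1), p k := by
    intro mm hmm
    refine Finset.sum_nonneg fun k hk => hppos k ?_
    simp only [Finset.mem_Icc] at hk ⊢; omega
  -- key identity by induction
  have key : ∀ mm, 1 ≤ mm → mm ≤ m + 1 →
      q = (∏ s ∈ Ico 1 mm, c s) * (∑ k ∈ Icc mm (m + 1), p k)
        + ∑ s ∈ Ico 1 mm, (c s - 1) * (∏ t ∈ Ico 1 s, c t) * H s := by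
    intro mm hmm
    induction mm, hmm using Nat.le_induction with
    | base => intro _; simp [hsum]
    | succ j hj ih =>
      intro hjn
      have hT : ∑ k ∈ Icc j (m + 1), p k
          = c j * (∑ k ∈ Icc (j + 1) (m + 1), p k) + (c j - 1) * H j := by
        have hsplit : Icc j (m + 1) = insert j (Icc (j + 1) (m + 1)) := by
          ext x; simp only [Finset.mem_Icc, Finset.mem_insert]; omega
        rw [hsplit, Finset.sum_insert (by simp), heq j hj (by omega)]
        ring
      rw [Finset.prod_Ico_succ_top hj, Finset.sum_Ico_succ_top hj,
        ih (by omega), hT]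
      ring
  have hkey := key (m + 1) (by omega) le_rfl
  rw [Finset.Ico_add_one_right_eq_Icc] at hkey
  simp only [Finset.Icc_self, Finset.sum_singleton] at hkey
  -- positivity facts
  have hPpos : 0 < ∏ jj ∈ Icc 1 m, c jj := by
    refine Finset.prod_pos fun i hi => hcpos i ?_
    simp only [Finset.mem_Icc] at hi ⊢; omega
  have hHn : 0 < H (m + 1) := hHpos (m + 1) (by simp)
  -- rates of users 1..m equal their demands
  have hrj : ∀ j ∈ Icc 1 m, r j = R j := by
    intro j hj
    simp only [Finset.mem_Icc] at hj
    have hj' : j ∈ Icc 1 (m + 1) := by simp only [Finset.mem_Icc]; omega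
    have hden : 0 < ∑ k ∈ Icc (j + 1) (m + 1), p k + H j :=
      add_pos_of_nonneg_of_pos (htail (j + 1) (by omega)) (hHpos j hj')
    have harg : 1 + p j / (∑ k ∈ Icc (j + 1) (m + 1), p k + H j) = c j := by
      rw [heq j hj.1 (by omega)]
      field_simp
      ring
    rw [hr j hj', harg, hc j hj',
      Real.logb_rpow (by norm_num) (by norm_num)]
    field_simp
  -- the last user's rate
  have hrn : r (m + 1) = B * Real.logb 2 (1 + p (m + 1) / H (m + 1)) := by
    have := hr (m + 1) (by simp)
    rwa [show Icc (m + 1 + 1) (m + 1) = ∅ from Finset.Icc_eq_empty (by omega),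
      Finset.sum_empty, zero_add] at this
  -- the argument identity
  have harg : 1 + q / ((∏ j ∈ Icc 1 m, c j) * H (m + 1))
      - ∑ j ∈ Icc 1 m, (c j - 1) * H j / ((∏ l ∈ Icc j m, c l) * H (m + 1))
      = 1 + p (m + 1) / H (m + 1) := by
    have hterm : ∀ j ∈ Icc 1 m,
        (c j - 1) * H j / ((∏ l ∈ Icc j m, c l) * H (m + 1))
        = (c j - 1) * (∏ t ∈ Ico 1 j, c t) * H j
            / ((∏ jj ∈ Icc 1 m, c jj) * H (m + 1)) := by
      intro j hj
      simp only [Finset.mem_Icc] at hj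
      have hsplit : (∏ t ∈ Ico 1 j, c t) * (∏ l ∈ Icc j m, c l)
          = ∏ jj ∈ Icc 1 m, c jj := by
        rw [← Finset.Ico_add_one_right_eq_Icc j m, ← Finset.Ico_add_one_right_eq_Icc 1 m]
        exact Finset.prod_Ico_consecutive c hj.1 (by omega)
      have hA : 0 < ∏ t ∈ Ico 1 j, c t := by
        refine Finset.prod_pos fun i hi => hcpos i ?_
        simp only [Finset.mem_Ico] at hi
        simp only [Finset.mem_Icc]; omega
      have hQ : 0 < ∏ l ∈ Icc j m, c l := by
        refine Finset.prod_pos fun i hi => hcpos i ?_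
        simp only [Finset.mem_Icc] at hi ⊢; omega
      rw [← hsplit]
      field_simp
    rw [Finset.sum_congr rfl hterm, ← Finset.sum_div]
    rw [hkey]
    have h1 : (∏ jj ∈ Icc 1 m, c jj) ≠ 0 := ne_of_gt hPpos
    have h2 : H (m + 1) ≠ 0 := ne_of_gt hHn
    field_simp
    ring
  -- assemble
  rw [Finset.sum_Icc_succ_top (by omega : 1 ≤ m + 1),
    Finset.sum_congr rfl hrj, hrn, harg]
  ring
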